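/- arXiv:1707.07174 — 2 statements merged into one kernel-verified Lean document; each statement's English description precedes it below -/
import Mathlib

section
/- Let 1 ≤ p ≤ n be integers and let M = (t_{ij}) be a random complex p×n matrix whose entries are independent random variables with E(t_{ij}) = 0 and E(|t_{ij}|²) = 1; set W := M*M. Then for every z ∈ ℂ, E(det(z·I_n − W)) = (−1)^p · p! · z^{n-p} · L_p^{(n-p)}(z). -/
open MeasureTheory ProbabilityTheory ComplexConjugate

private lemma integral_complex_eq {Ω : Type*} [MeasurableSpace Ω] {μ : Measure Ω}
    {f : Ω → ℂ} (hf : Integrable f μ) :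
    ∫ ω, f ω ∂μ = ((∫ ω, (f ω).re ∂μ : ℝ) : ℂ) + ((∫ ω, (f ω).im ∂μ : ℝ) : ℂ) * Complex.I := by
  simpa using (integral_re_add_im hf).symm

private lemma indepFun_integral_mul_complex {Ω : Type*} [MeasurableSpace Ω] {μ : Measure Ω}
    {X Y : Ω → ℂ} (h : IndepFun X Y μ) (hX : Integrable X μ) (hY : Integrable Y μ) :
    ∫ ω, X ω * Y ω ∂μ = (∫ ω, X ω ∂μ) * ∫ ω, Y ω ∂μ := by
  have mre : Measurable (fun z : ℂ => z.re) := Complex.measurable_re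
  have mim : Measurable (fun z : ℂ => z.im) := Complex.measurable_im
  have hrr : IndepFun (fun ω => (X ω).re) (fun ω => (Y ω).re) μ := h.comp mre mre
  have hri : IndepFun (fun ω => (X ω).re) (fun ω => (Y ω).im) μ := h.comp mre mim
  have hir : IndepFun (fun ω => (X ω).im) (fun ω => (Y ω).re) μ := h.comp mim mre
  have hii : IndepFun (fun ω => (X ω).im) (fun ω => (Y ω).im) μ := h.comp mim mim
  have iXr : Integrable (fun ω => (X ω).re) μ := hX.re
  have iXi : Integrable (fun ω => (X ω).im) μ := hX.im
  have iYr : Integrable (fun ω => (Y ω).re) μ := hY.re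
  have iYi : Integrable (fun ω => (Y ω).im) μ := hY.im
  have irr : Integrable (fun ω => (X ω).re * (Y ω).re) μ := hrr.integrable_mul iXr iYr
  have iri : Integrable (fun ω => (X ω).re * (Y ω).im) μ := hri.integrable_mul iXr iYi
  have iir : Integrable (fun ω => (X ω).im * (Y ω).re) μ := hir.integrable_mul iXi iYr
  have iii : Integrable (fun ω => (X ω).im * (Y ω).im) μ := hii.integrable_mul iXi iYi
  have hXY : Integrable (fun ω => X ω * Y ω) μ := h.integrable_mul hX hY
  rw [integral_complex_eq hXY, integral_complex_eq hX, integral_complex_eq hY]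
  have hre : (fun ω => (X ω * Y ω).re) = fun ω => (X ω).re * (Y ω).re - (X ω).im * (Y ω).im := by
    funext ω; simp [Complex.mul_re]
  have him : (fun ω => (X ω * Y ω).im) = fun ω => (X ω).re * (Y ω).im + (X ω).im * (Y ω).re := by
    funext ω; simp [Complex.mul_im]
  have err : (∫ a, (X a).re * (Y a).re ∂μ) = (∫ ω, (X ω).re ∂μ) * ∫ ω, (Y ω).re ∂μ :=
    hrr.integral_mul_eq_mul_integral iXr.aestronglyMeasurable iYr.aestronglyMeasurable
  have eii : (∫ a, (X a).im * (Y a).im ∂μ) = (∫ ω, (X ω).im ∂μ) * ∫ ω, (Y ω).im ∂μ :=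
    hii.integral_mul_eq_mul_integral iXi.aestronglyMeasurable iYi.aestronglyMeasurable
  have eri : (∫ a, (X a).re * (Y a).im ∂μ) = (∫ ω, (X ω).re ∂μ) * ∫ ω, (Y ω).im ∂μ :=
    hri.integral_mul_eq_mul_integral iXr.aestronglyMeasurable iYi.aestronglyMeasurable
  have eir : (∫ a, (X a).im * (Y a).re ∂μ) = (∫ ω, (X ω).im ∂μ) * ∫ ω, (Y ω).re ∂μ :=
    hir.integral_mul_eq_mul_integral iXi.aestronglyMeasurable iYr.aestronglyMeasurable
  rw [hre, him, integral_sub irr iii, integral_add iri iir, err, eii, eri, eir]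
  push_cast
  ring_nf
  rw [Complex.I_sq]
  ring

private lemma iIndepFun_integral_finset_prod_complex {Ω ι : Type*} [MeasurableSpace Ω]
    {μ : Measure Ω} [IsProbabilityMeasure μ]
    {X : ι → Ω → ℂ} (hindep : iIndepFun X μ)
    (hmeas : ∀ i, Measurable (X i)) (hint : ∀ i, Integrable (X i) μ) (s : Finset ι) :
    Integrable (fun ω => ∏ i ∈ s, X i ω) μ ∧
      (∫ ω, ∏ i ∈ s, X i ω ∂μ) = ∏ i ∈ s, ∫ ω, X i ω ∂μ := by
  classical
  induction s using Finset.cons_induction with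
  | empty => simp
  | cons a s ha ih =>
    have happ : (∏ i ∈ s, X i) = fun ω => ∏ i ∈ s, X i ω := by
      funext ω; simp [Finset.prod_apply]
    have hIF : IndepFun (X a) (fun ω => ∏ i ∈ s, X i ω) μ := by
      have := (hindep.indepFun_finset_prod_of_notMem hmeas ha).symm
      rwa [happ] at this
    have hprodint : Integrable (fun ω => ∏ i ∈ s, X i ω) μ := ih.1
    have hint' : Integrable (fun ω => X a ω * ∏ i ∈ s, X i ω) μ := by
      have := hIF.integrable_mul (hint a) hprodint
      simpa [Pi.mul_def] using this
    constructor
    · simpa only [Finset.prod_cons] using hint'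
    · simp only [Finset.prod_cons]
      rw [← ih.2, ← indepFun_integral_mul_complex hIF (hint a) hprodint]

open MeasureTheory ProbabilityTheory Matrix
open scoped ENNReal

private lemma option_eq_of_some_iff {α : Type*} {o₁ o₂ : Option α}
    (h : ∀ i, o₁ = some i ↔ o₂ = some i) : o₁ = o₂ := by
  cases o₁ with
  | none =>
    cases o₂ with
    | none => rfl
    | some v => exact absurd ((h v).2 rfl) (by simp)
  | some v => exact ((h v).1 rfl).symm

/-- injectivity on the support -/
private def InjOpt {p n : ℕ} (g : Fin n → Option (Fin p)) : Prop :=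
  ∀ j k i, g j = some i → g k = some i → j = k

/-- support of an option-valued function -/
private def suppC {p n : ℕ} (g : Fin n → Option (Fin p)) : Finset (Fin n) :=
  Finset.univ.filter (fun j => ¬ g j = none)

private lemma sum_sign_filter {p n : ℕ} (g : Fin n → Option (Fin p))
    [inst : DecidablePred (fun σ : Equiv.Perm (Fin n) =>
      (∀ j, g (σ j) = g j) ∧ (∀ j, g j = none → σ j = j))]
    [inst2 : Decidable (InjOpt g)] :
    (∑ σ ∈ Finset.univ.filter (fun σ : Equiv.Perm (Fin n) =>
        (∀ j, g (σ j) = g j) ∧ (∀ j, g j = none → σ j = j)),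
      ((Equiv.Perm.sign σ : ℤ) : ℂ))
    = if InjOpt g then 1 else 0 := by
  classical
  by_cases hinj : InjOpt g
  · rw [if_pos hinj]
    have hset : Finset.univ.filter (fun σ : Equiv.Perm (Fin n) =>
        (∀ j, g (σ j) = g j) ∧ (∀ j, g j = none → σ j = j)) = {1} := by
      ext σ
      simp only [Finset.mem_filter, Finset.mem_univ, true_and, Finset.mem_singleton]
      constructor
      · rintro ⟨h1, h2⟩
        refine Equiv.ext fun k => ?_
        rw [Equiv.Perm.one_apply]
        cases hk : g k with
        | none => exact h2 k hk
        | some i =>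
          have : g (σ k) = some i := by rw [h1 k, hk]
          exact hinj (σ k) k i this hk
      · rintro rfl
        exact ⟨fun j => rfl, fun j _ => rfl⟩
    rw [hset, Finset.sum_singleton]
    simp
  · rw [if_neg hinj]
    unfold InjOpt at hinj
    push_neg at hinj
    obtain ⟨j, k, i, hj, hk, hjk⟩ := hinj
    have hswap : ∀ l, g (Equiv.swap j k l) = g l := by
      intro l
      rcases eq_or_ne l j with rfl | hlj
      · rw [Equiv.swap_apply_left, hk, hj]
      rcases eq_or_ne l k with rfl | hlk
      · rw [Equiv.swap_apply_right, hj, hk]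
      · rw [Equiv.swap_apply_of_ne_of_ne hlj hlk]
    refine Finset.sum_involution (fun σ _ => σ * Equiv.swap j k) ?_ ?_ ?_ ?_
    · intro σ _
      have hs : Equiv.Perm.sign (σ * Equiv.swap j k) = -Equiv.Perm.sign σ := by
        rw [Equiv.Perm.sign_mul, Equiv.Perm.sign_swap hjk, mul_neg, mul_one]
      rw [hs]
      push_cast
      ring
    · intro σ _ _ hcontra
      have h1 : σ * Equiv.swap j k = σ * 1 := by rw [mul_one]; exact hcontra
      have h2 : Equiv.swap j k = 1 := mul_left_cancel h1
      exact hjk (Equiv.swap_eq_one_iff.mp h2)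
    · intro σ hσ
      simp only [Finset.mem_filter, Finset.mem_univ, true_and] at hσ ⊢
      obtain ⟨h1, h2⟩ := hσ
      refine ⟨fun l => by rw [Equiv.Perm.mul_apply, h1, hswap], fun l hl => ?_⟩
      have hlj : l ≠ j := fun h => by rw [h, hj] at hl; exact absurd hl (by simp)
      have hlk : l ≠ k := fun h => by rw [h, hk] at hl; exact absurd hl (by simp)
      rw [Equiv.Perm.mul_apply, Equiv.swap_apply_of_ne_of_ne hlj hlk]
      exact h2 l hl
    · intro σ _
      show σ * Equiv.swap j k * Equiv.swap j k = σ
      rw [mul_assoc, Equiv.swap_mul_self, mul_one]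


private lemma card_filter_eq {p n : ℕ} (hp : 1 ≤ p)
    [inst : ∀ g : Fin n → Option (Fin p), Decidable (InjOpt g)]
    (T : Finset (Fin n)) :
    (((Finset.univ : Finset (Fin n → Option (Fin p))).filter
        (fun g => InjOpt g)).filter (fun g => suppC g = T)).card
      = p.descFactorial T.card := by
  classical
  have hd : (0 : ℕ) < p := hp
  have hcard : (Finset.univ : Finset ({x // x ∈ T} ↪ Fin p)).card = p.descFactorial T.card := by
    rw [Finset.card_univ, Fintype.card_embedding_eq, Fintype.card_fin, Fintype.card_coe]
  rw [← hcard]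
  refine Finset.card_bij'
    (i := fun g hg => ⟨fun x => (g x.1).getD ⟨0, hp⟩, ?_⟩)
    (j := fun f _ => fun l => if h : l ∈ T then some (f ⟨l, h⟩) else none)
    ?_ ?_ ?_ ?_
  · -- injectivity of the embedding
    simp only [Finset.mem_filter, Finset.mem_univ, true_and] at hg
    obtain ⟨hinj, hsupp⟩ := hg
    intro x y hxy
    have hx : ¬ g x.1 = none := by
      have h2 : (↑x : Fin n) ∈ suppC g := by rw [hsupp]; exact x.2
      simpa [suppC] using h2
    have hy : ¬ g y.1 = none := by
      have h2 : (↑y : Fin n) ∈ suppC g := by rw [hsupp]; exact y.2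
      simpa [suppC] using h2
    obtain ⟨ix, hix⟩ := Option.ne_none_iff_exists'.mp hx
    obtain ⟨iy, hiy⟩ := Option.ne_none_iff_exists'.mp hy
    simp only [hix, hiy, Option.getD_some] at hxy
    exact Subtype.ext (hinj x.1 y.1 ix hix (by rw [hiy, hxy]))
  · intro g hg
    exact Finset.mem_univ _
  · -- backward map lands in the filter set
    intro f _
    simp only [Finset.mem_filter, Finset.mem_univ, true_and]
    constructor
    · intro a b i ha hb
      by_cases hA : a ∈ T
      · by_cases hB : b ∈ T
        · simp only [dif_pos hA] at ha
          simp only [dif_pos hB] at hb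
          have : f ⟨a, hA⟩ = f ⟨b, hB⟩ := by
            rw [Option.some_inj] at ha hb
            rw [ha, hb]
          have := f.injective this
          exact congrArg Subtype.val this
        · simp only [dif_neg hB] at hb
          exact absurd hb (by simp)
      · simp only [dif_neg hA] at ha
        exact absurd ha (by simp)
    · ext l
      simp only [suppC, Finset.mem_filter, Finset.mem_univ, true_and]
      by_cases hl : l ∈ T
      · simp [hl]
      · simp [hl]
  · -- left inverse
    intro g hg
    simp only [Finset.mem_filter, Finset.mem_univ, true_and] at hg
    obtain ⟨hinj, hsupp⟩ := hg
    funext l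
    by_cases hl : l ∈ T
    · have hne : ¬ g l = none := by
        have h2 : l ∈ suppC g := by rw [hsupp]; exact hl
        simpa [suppC] using h2
      obtain ⟨i, hi⟩ := Option.ne_none_iff_exists'.mp hne
      simp only [dif_pos hl, Function.Embedding.coeFn_mk, hi, Option.getD_some]
    · have h2 : l ∉ suppC g := by rw [hsupp]; exact hl
      simp only [suppC, Finset.mem_filter, Finset.mem_univ, true_and, not_not] at h2
      simp only [dif_neg hl, h2]
  · -- right inverse
    intro f _
    apply DFunLike.ext
    intro x
    simp [dif_pos x.2]

/-- Generalized Laguerre polynomial `L_p^{(α)}`. -/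
noncomputable def laguerre (α : ℝ) (p : ℕ) (z : ℂ) : ℂ :=
  ∑ k ∈ Finset.range (p + 1),
    (((descPochhammer ℝ (p - k)).eval ((p : ℝ) + α) / (p - k).factorial : ℝ) : ℂ) *
      (-z) ^ k / (k.factorial : ℂ)

/-- Let `1 ≤ p ≤ n` and let `M` be a random complex `p×n` matrix whose entries are
independent with mean `0` and `E(|t_{ij}|²) = 1`; set `W := Mᴴ M`.  Then for every
`z ∈ ℂ`, `E(det(z I_n − W)) = (−1)^p p! z^{n-p} L_p^{(n-p)}(z)`. -/
theorem expectation_det_eq_laguerre (p n : ℕ) (hp : 1 ≤ p) (hpn : p ≤ n)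
    (Ω : Type) (_ : MeasureSpace Ω) (_ : IsProbabilityMeasure (volume : Measure Ω))
    (M : Ω → Matrix (Fin p) (Fin n) ℂ)
    (hmeas : ∀ i j, Measurable fun ω => M ω i j)
    (hindep : iIndepFun
      (fun (ij : Fin p × Fin n) ω => M ω ij.1 ij.2) (volume : Measure Ω))
    (hmean : ∀ i j, (∫ ω, M ω i j) = 0)
    (hvar : ∀ i j, (∫ ω, (‖M ω i j‖ : ℝ) ^ 2) = 1)
    (z : ℂ) :
    (∫ ω, (z • (1 : Matrix (Fin n) (Fin n) ℂ) - (M ω)ᴴ * M ω).det) =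
      (-1) ^ p * (p.factorial : ℂ) * z ^ (n - p) * laguerre ((n : ℝ) - p) p z := by
  classical
  set X : Fin p × Fin n → Ω → ℂ := fun e ω => M ω e.1 e.2 with hXdef
  have hXmeas : ∀ e, Measurable (X e) := fun e => hmeas e.1 e.2
  have hXindep : iIndepFun X volume := hindep
  have hsq : ∀ e, Integrable (fun ω => (‖X e ω‖ : ℝ) ^ 2) := by
    intro e
    by_contra h
    have h2 := hvar e.1 e.2
    rw [integral_undef h] at h2
    exact zero_ne_one h2
  have hXint : ∀ e, Integrable (X e) := by
    intro e
    have h2 : MemLp (X e) 2 (volume : Measure Ω) := by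
      rw [memLp_two_iff_integrable_sq_norm (hXmeas e).aestronglyMeasurable]
      simpa using hsq e
    exact h2.integrable (by norm_num)
  have hXconjint : ∀ e, Integrable (fun ω => (starRingEnd ℂ) (X e ω)) := by
    intro e
    have h2 : (fun ω => (starRingEnd ℂ) (X e ω)) =
        fun ω => ((X e ω).re : ℂ) - ((X e ω).im : ℂ) * Complex.I := by
      funext ω; simp [Complex.ext_iff]
    rw [h2]
    exact ((hXint e).re.ofReal).sub (((hXint e).im.ofReal).mul_const _)
  have habs : ∀ e, (fun ω => (starRingEnd ℂ) (X e ω) * X e ω) =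
      fun ω => ((‖X e ω‖ ^ 2 : ℝ) : ℂ) := by
    intro e
    funext ω
    rw [mul_comm, Complex.mul_conj]
    norm_cast
    rw [Complex.sq_norm]
  have hcs : ∀ e, Integrable (fun ω => (starRingEnd ℂ) (X e ω) * X e ω) := by
    intro e
    rw [habs e]
    exact (hsq e).ofReal
  have hmean0 : ∀ e, (∫ ω, X e ω) = 0 := fun e => hmean e.1 e.2
  have hmeanconj : ∀ e, (∫ ω, (starRingEnd ℂ) (X e ω)) = 0 := by
    intro e
    rw [integral_conj, hmean0 e, map_zero]
  have hmean2 : ∀ e, (∫ ω, (starRingEnd ℂ) (X e ω) * X e ω) = 1 := by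
    intro e
    calc (∫ ω, (starRingEnd ℂ) (X e ω) * X e ω)
        = ∫ ω, ((‖X e ω‖ ^ 2 : ℝ) : ℂ) := by rw [habs e]
      _ = ((∫ ω, (‖X e ω‖ : ℝ) ^ 2 : ℝ) : ℂ) := integral_ofReal
      _ = 1 := by rw [hvar e.1 e.2]; norm_num
  -- the factor functions
  set Fo : Equiv.Perm (Fin n) → Fin n → Option (Fin p) → Ω → ℂ :=
    fun σ j o ω => o.elim (z * (if σ j = j then 1 else 0))
      (fun i => -((starRingEnd ℂ) (X (i, σ j) ω) * X (i, j) ω)) with hFo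
  set V : Equiv.Perm (Fin n) → (Fin n → Option (Fin p)) → ℂ := fun σ g =>
    if (∀ j, g (σ j) = g j) ∧ (∀ j, g j = none → σ j = j) then
      (-1) ^ (suppC g).card * z ^ (n - (suppC g).card) else 0 with hV
  have key : ∀ (σ : Equiv.Perm (Fin n)) (g : Fin n → Option (Fin p)),
      Integrable (fun ω => ∏ j, Fo σ j (g j) ω) ∧
        (∫ ω, ∏ j, Fo σ j (g j) ω) = V σ g := by
    intro σ g
    set dd : Fin p := ⟨0, hp⟩ with hdd
    set a : Fin n → Fin p × Fin n := fun j => ((g j).getD dd, σ j) with ha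
    set b : Fin n → Fin p × Fin n := fun j => ((g j).getD dd, j) with hb
    set key2 : Fin n × Bool → Fin p × Fin n := fun x => if x.2 then b x.1 else a x.1 with hkey2
    set atom : Fin n × Bool → Ω → ℂ := fun x ω =>
      if x.2 then X (key2 x) ω else (starRingEnd ℂ) (X (key2 x) ω) with hatom
    set φ : Fin p × Fin n → ℂ → ℂ := fun e w =>
      (if g (σ.symm e.2) = some e.1 then (starRingEnd ℂ) w else 1) *
      (if g e.2 = some e.1 then w else 1) with hφ
    have hmem : ∀ (j : Fin n) (c : Bool) (e : Fin p × Fin n),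
        ((j, c) ∈ ((suppC g) ×ˢ (Finset.univ : Finset Bool)).filter (fun x => key2 x = e)) ↔
          (if c then g e.2 = some e.1 ∧ j = e.2
           else g (σ.symm e.2) = some e.1 ∧ j = σ.symm e.2) := by
      intro j c e
      obtain ⟨e1, e2⟩ := e
      simp only [Finset.mem_filter, Finset.mem_product, Finset.mem_univ, and_true, suppC,
        Finset.mem_filter, Finset.mem_univ, true_and, hkey2, ha, hb]
      cases c with
      | false =>
        simp only [Bool.false_eq_true, if_false]
        constructor
        · rintro ⟨hj, hkey⟩
          obtain ⟨i, hi⟩ := Option.ne_none_iff_exists'.mp hj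
          rw [hi] at hkey
          simp only [Option.getD_some, Prod.mk.injEq] at hkey
          obtain ⟨he1, he2⟩ := hkey
          subst he1
          subst he2
          exact ⟨by rw [Equiv.symm_apply_apply, hi], by rw [Equiv.symm_apply_apply]⟩
        · rintro ⟨h1, rfl⟩
          refine ⟨by rw [h1]; simp, ?_⟩
          rw [h1]
          simp only [Option.getD_some, Equiv.apply_symm_apply]
      | true =>
        simp only [if_true]
        constructor
        · rintro ⟨hj, hkey⟩
          obtain ⟨i, hi⟩ := Option.ne_none_iff_exists'.mp hj
          rw [hi] at hkey
          simp only [Option.getD_some, Prod.mk.injEq] at hkey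
          obtain ⟨he1, he2⟩ := hkey
          subst he1
          subst he2
          exact ⟨hi, rfl⟩
        · rintro ⟨h1, rfl⟩
          refine ⟨by rw [h1]; simp, ?_⟩
          rw [h1]
          simp only [Option.getD_some]
    have hfib : ∀ e : Fin p × Fin n,
        ((suppC g) ×ˢ (Finset.univ : Finset Bool)).filter (fun x => key2 x = e) =
          ((if g (σ.symm e.2) = some e.1 then {(σ.symm e.2, false)}
              else (∅ : Finset (Fin n × Bool))) ∪
           (if g e.2 = some e.1 then {(e.2, true)} else ∅)) := by
      intro e
      ext x
      obtain ⟨j, c⟩ := x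
      rw [hmem j c e]
      cases c <;> by_cases h1 : g (σ.symm e.2) = some e.1 <;> by_cases h2 : g e.2 = some e.1 <;>
        simp [h1, h2, Prod.ext_iff]
    have hdisj : ∀ e : Fin p × Fin n,
        Disjoint (if g (σ.symm e.2) = some e.1 then ({(σ.symm e.2, false)} : Finset (Fin n × Bool))
            else ∅)
          (if g e.2 = some e.1 then {(e.2, true)} else ∅) := by
      intro e
      by_cases h1 : g (σ.symm e.2) = some e.1 <;> by_cases h2 : g e.2 = some e.1 <;>
        simp [h1, h2, Finset.disjoint_singleton, Prod.ext_iff]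
    have hfibprod : ∀ (e : Fin p × Fin n) (ω : Ω),
        (∏ x ∈ ((suppC g) ×ˢ (Finset.univ : Finset Bool)).filter (fun x => key2 x = e),
          atom x ω) = φ e (X e ω) := by
      intro e ω
      rw [hfib e, Finset.prod_union (hdisj e), hφ]
      congr 1
      · by_cases h1 : g (σ.symm e.2) = some e.1
        · rw [if_pos h1, if_pos h1, Finset.prod_singleton]
          simp only [hatom, hkey2, ha, Bool.false_eq_true, if_false, h1, Option.getD_some,
            Equiv.apply_symm_apply]
        · rw [if_neg h1, if_neg h1, Finset.prod_empty]
      · by_cases h2 : g e.2 = some e.1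
        · rw [if_pos h2, if_pos h2, Finset.prod_singleton]
          simp only [hatom, hkey2, hb, if_true, h2, Option.getD_some]
        · rw [if_neg h2, if_neg h2, Finset.prod_empty]
    have hsplit : (fun ω => ∏ j, Fo σ j (g j) ω) = fun ω =>
        (∏ j ∈ Finset.univ.filter (fun j => g j = none), (z * (if σ j = j then 1 else 0))) *
        ((-1) ^ (suppC g).card * ∏ e : Fin p × Fin n, φ e (X e ω)) := by
      funext ω
      rw [← Finset.prod_filter_mul_prod_filter_not Finset.univ (fun j => g j = none)
        (fun j => Fo σ j (g j) ω)]
      congr 1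
      · refine Finset.prod_congr rfl fun j hj => ?_
        rw [(Finset.mem_filter.mp hj).2]
        rfl
      · have hstep1 : ∀ j ∈ Finset.univ.filter (fun j : Fin n => ¬ g j = none),
            Fo σ j (g j) ω = -((starRingEnd ℂ) (X (a j) ω) * X (b j) ω) := by
          intro j hj
          obtain ⟨i, hi⟩ := Option.ne_none_iff_exists'.mp (Finset.mem_filter.mp hj).2
          rw [hi]
          simp only [hFo, Option.elim, ha, hb, hi, Option.getD_some]
        rw [Finset.prod_congr rfl hstep1,
          Finset.prod_congr rfl (fun j (hj : j ∈ Finset.univ.filter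
              (fun j : Fin n => ¬ g j = none)) =>
            neg_eq_neg_one_mul ((starRingEnd ℂ) (X (a j) ω) * X (b j) ω)),
          Finset.prod_mul_distrib, Finset.prod_const]
        have hsupp_eq : Finset.univ.filter (fun j : Fin n => ¬ g j = none) = suppC g := rfl
        rw [hsupp_eq]
        congr 1
        have hbool : (∏ j ∈ suppC g, ((starRingEnd ℂ) (X (a j) ω) * X (b j) ω))
            = ∏ x ∈ (suppC g) ×ˢ (Finset.univ : Finset Bool), atom x ω := by
          rw [Finset.prod_product]
          refine Finset.prod_congr rfl fun j _ => ?_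
          rw [Fintype.prod_bool]
          show (starRingEnd ℂ) (X (a j) ω) * X (b j) ω = atom (j, true) ω * atom (j, false) ω
          simp only [hatom, hkey2, if_true, Bool.false_eq_true, if_false]
          ring
        rw [hbool,
          ← Finset.prod_fiberwise_of_maps_to (g := key2)
            (t := (Finset.univ : Finset (Fin p × Fin n)))
            (fun x _ => Finset.mem_univ (key2 x)) (fun x => atom x ω)]
        exact Finset.prod_congr rfl fun e _ => hfibprod e ω
    -- measurability and integrability of the φ-factors
    have hφmeas : ∀ e, Measurable (φ e) := by
      intro e
      apply Measurable.mul <;> split_ifs <;>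
        first
          | exact Complex.continuous_conj.measurable
          | exact measurable_id
          | exact measurable_const
    have hφint : ∀ e, Integrable (fun ω => φ e (X e ω)) := by
      intro e
      simp only [hφ]
      split_ifs with h1 h2
      · exact hcs e
      · simpa using hXconjint e
      · simpa using hXint e
      · simpa using (integrable_const (1 : ℂ))
    have hφval : ∀ e, (∫ ω, φ e (X e ω)) =
        if ((g (σ.symm e.2) = some e.1) ↔ (g e.2 = some e.1)) then 1 else 0 := by
      intro e
      simp only [hφ]
      by_cases h1 : g (σ.symm e.2) = some e.1 <;> by_cases h2 : g e.2 = some e.1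
      · rw [if_pos (iff_of_true h1 h2)]
        simp only [if_pos h1, if_pos h2]
        exact hmean2 e
      · rw [if_neg (by simp [h1, h2])]
        simp only [if_pos h1, if_neg h2]
        simpa using hmeanconj e
      · rw [if_neg (by simp [h1, h2])]
        simp only [if_neg h1, if_pos h2]
        simpa using hmean0 e
      · rw [if_pos (iff_of_false h1 h2)]
        simp only [if_neg h1, if_neg h2]
        simpa using (integral_const (1 : ℂ))
    have hindep' : iIndepFun (fun e => fun ω => φ e (X e ω)) volume :=
      hXindep.comp φ hφmeas
    have hprod := iIndepFun_integral_finset_prod_complex hindep'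
      (fun e => (hφmeas e).comp (hXmeas e)) hφint Finset.univ
    constructor
    · rw [hsplit]
      exact (hprod.1.const_mul _).const_mul _
    · rw [hsplit, integral_const_mul, integral_const_mul, hprod.2]
      have hprodval : (∏ e : Fin p × Fin n, ∫ ω, φ e (X e ω))
          = if (∀ j, g (σ j) = g j) then 1 else 0 := by
        rw [Finset.prod_congr rfl fun e _ => hφval e]
        by_cases hall : ∀ j, g (σ j) = g j
        · rw [if_pos hall]
          refine Finset.prod_eq_one fun e _ => ?_
          rw [if_pos]
          have hge : g (σ.symm e.2) = g e.2 := by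
            conv_rhs => rw [← Equiv.apply_symm_apply σ e.2]
            rw [hall (σ.symm e.2)]
          rw [hge]
        · rw [if_neg hall]
          push_neg at hall
          obtain ⟨j, hj⟩ := hall
          have hexe : ∃ e : Fin p × Fin n,
              ¬ ((g (σ.symm e.2) = some e.1) ↔ (g e.2 = some e.1)) := by
            cases hgj : g j with
            | some i =>
              refine ⟨(i, σ j), fun hiff => ?_⟩
              simp only [Equiv.symm_apply_apply] at hiff
              exact hj ((hiff.mp hgj).trans hgj.symm)
            | none =>
              have hne : ¬ g (σ j) = none := fun h => hj (h.trans hgj.symm)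
              obtain ⟨i, hi⟩ := Option.ne_none_iff_exists'.mp hne
              refine ⟨(i, σ j), fun hiff => ?_⟩
              simp only [Equiv.symm_apply_apply] at hiff
              rw [hgj] at hiff
              exact absurd (hiff.mpr hi) (by simp)
          obtain ⟨e, he⟩ := hexe
          exact Finset.prod_eq_zero (Finset.mem_univ e) (if_neg he)
      have hc0val : (∏ j ∈ Finset.univ.filter (fun j => g j = none),
          (z * (if σ j = j then 1 else 0)))
          = if (∀ j, g j = none → σ j = j) then z ^ (n - (suppC g).card) else 0 := by
        by_cases hfix : ∀ j, g j = none → σ j = j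
        · rw [if_pos hfix]
          have hone : ∀ j ∈ Finset.univ.filter (fun j : Fin n => g j = none),
              (z * (if σ j = j then 1 else 0)) = z := by
            intro j hj
            rw [if_pos (hfix j (Finset.mem_filter.mp hj).2), mul_one]
          rw [Finset.prod_congr rfl hone, Finset.prod_const]
          congr 1
          have hcards := Finset.card_filter_add_card_filter_not
            (s := (Finset.univ : Finset (Fin n))) (fun j : Fin n => g j = none)
          have huniv : (Finset.univ : Finset (Fin n)).card = n := by
            rw [Finset.card_univ, Fintype.card_fin]
          have hsupp_eq : Finset.univ.filter (fun j : Fin n => ¬ g j = none) = suppC g := rfl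
          rw [huniv, hsupp_eq] at hcards
          omega
        · rw [if_neg hfix]
          push_neg at hfix
          obtain ⟨j, hjnone, hσj⟩ := hfix
          refine Finset.prod_eq_zero (Finset.mem_filter.mpr ⟨Finset.mem_univ j, hjnone⟩) ?_
          rw [if_neg hσj, mul_zero]
      rw [hprodval, hc0val]
      simp only [hV]
      by_cases h1 : ∀ j, g (σ j) = g j <;> by_cases h2 : ∀ j, g j = none → σ j = j <;>
        simp [h1, h2] <;> ring
  -- determinant expansion
  have hdet : ∀ ω, (z • (1 : Matrix (Fin n) (Fin n) ℂ) - (M ω)ᴴ * M ω).det =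
      ∑ σ : Equiv.Perm (Fin n), (((Equiv.Perm.sign σ : ℤ) : ℂ) *
        ∑ g : Fin n → Option (Fin p), ∏ j, Fo σ j (g j) ω) := by
    intro ω
    rw [Matrix.det_apply']
    refine Finset.sum_congr rfl fun σ _ => ?_
    congr 1
    rw [← Fintype.piFinset_univ,
      ← Finset.prod_univ_sum (fun _ : Fin n => (Finset.univ : Finset (Option (Fin p))))
        (fun j o => Fo σ j o ω)]
    refine Finset.prod_congr rfl fun j _ => ?_
    rw [Fintype.sum_option]
    simp only [Matrix.sub_apply, Matrix.smul_apply, Matrix.one_apply, Matrix.mul_apply,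
      Matrix.conjTranspose_apply, smul_eq_mul, hFo, Option.elim]
    rw [sub_eq_add_neg, ← Finset.sum_neg_distrib]
    simp [Complex.star_def]
    rfl
  calc (∫ ω, (z • (1 : Matrix (Fin n) (Fin n) ℂ) - (M ω)ᴴ * M ω).det)
      = ∫ ω, ∑ σ : Equiv.Perm (Fin n), (((Equiv.Perm.sign σ : ℤ) : ℂ) *
          ∑ g : Fin n → Option (Fin p), ∏ j, Fo σ j (g j) ω) :=
        integral_congr_ae (Filter.Eventually.of_forall fun ω => hdet ω)
    _ = ∑ σ : Equiv.Perm (Fin n), ∫ ω, (((Equiv.Perm.sign σ : ℤ) : ℂ) *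
          ∑ g : Fin n → Option (Fin p), ∏ j, Fo σ j (g j) ω) := by
        refine integral_finset_sum _ fun σ _ => ?_
        exact (integrable_finset_sum _ fun g _ => (key σ g).1).const_mul _
    _ = ∑ σ : Equiv.Perm (Fin n), (((Equiv.Perm.sign σ : ℤ) : ℂ) *
          ∑ g : Fin n → Option (Fin p), V σ g) := by
        refine Finset.sum_congr rfl fun σ _ => ?_
        rw [integral_const_mul, integral_finset_sum _ fun g _ => (key σ g).1]
        congr 1
        exact Finset.sum_congr rfl fun g _ => (key σ g).2
    _ = ∑ g : Fin n → Option (Fin p), ∑ σ : Equiv.Perm (Fin n),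
          (((Equiv.Perm.sign σ : ℤ) : ℂ) * V σ g) := by
        simp_rw [Finset.mul_sum]
        rw [Finset.sum_comm]
    _ = ∑ g : Fin n → Option (Fin p),
          (if InjOpt g then (-1 : ℂ) ^ (suppC g).card * z ^ (n - (suppC g).card) else 0) := by
        refine Finset.sum_congr rfl fun g _ => ?_
        calc (∑ σ : Equiv.Perm (Fin n), (((Equiv.Perm.sign σ : ℤ) : ℂ) * V σ g))
            = ∑ σ : Equiv.Perm (Fin n),
                (if (∀ j, g (σ j) = g j) ∧ (∀ j, g j = none → σ j = j)
                  then (((Equiv.Perm.sign σ : ℤ) : ℂ) *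
                    ((-1) ^ (suppC g).card * z ^ (n - (suppC g).card))) else 0) := by
              refine Finset.sum_congr rfl fun σ _ => ?_
              simp only [hV]
              by_cases h : (∀ j, g (σ j) = g j) ∧ (∀ j, g j = none → σ j = j)
              · rw [if_pos h, if_pos h]
              · rw [if_neg h, if_neg h, mul_zero]
          _ = ∑ σ ∈ Finset.univ.filter (fun σ : Equiv.Perm (Fin n) =>
                (∀ j, g (σ j) = g j) ∧ (∀ j, g j = none → σ j = j)),
                (((Equiv.Perm.sign σ : ℤ) : ℂ) *
                  ((-1) ^ (suppC g).card * z ^ (n - (suppC g).card))) :=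
              (Finset.sum_filter _ _).symm
          _ = (∑ σ ∈ Finset.univ.filter (fun σ : Equiv.Perm (Fin n) =>
                (∀ j, g (σ j) = g j) ∧ (∀ j, g j = none → σ j = j)),
                ((Equiv.Perm.sign σ : ℤ) : ℂ)) *
                  ((-1) ^ (suppC g).card * z ^ (n - (suppC g).card)) := by
              rw [← Finset.sum_mul]
          _ = (if InjOpt g then (1:ℂ) else 0) *
                  ((-1) ^ (suppC g).card * z ^ (n - (suppC g).card)) := by
              rw [sum_sign_filter g]
          _ = (if InjOpt g then (-1 : ℂ) ^ (suppC g).card * z ^ (n - (suppC g).card) else 0) := by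
              by_cases h : InjOpt g <;> simp [h]
    _ = ∑ T ∈ (Finset.univ : Finset (Fin n)).powerset,
          ((p.descFactorial T.card : ℂ) * ((-1) ^ T.card * z ^ (n - T.card))) := by
        rw [← Finset.sum_filter]
        rw [← Finset.sum_fiberwise_of_maps_to (g := fun g => suppC g)
          (t := (Finset.univ : Finset (Fin n)).powerset)
          (fun g _ => Finset.mem_powerset.mpr (Finset.subset_univ _)) _]
        refine Finset.sum_congr rfl fun T _ => ?_
        have hconst : ∀ g ∈ (Finset.univ.filter fun g : Fin n → Option (Fin p) =>
            InjOpt g).filter (fun g => suppC g = T),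
            (-1:ℂ) ^ (suppC g).card * z ^ (n - (suppC g).card)
              = (-1) ^ T.card * z ^ (n - T.card) := by
          intro g hg
          rw [(Finset.mem_filter.mp hg).2]
        rw [Finset.sum_congr rfl hconst, Finset.sum_const, card_filter_eq hp T, nsmul_eq_mul]
    _ = ∑ k ∈ Finset.range (n + 1), ((n.choose k : ℂ) *
          ((p.descFactorial k : ℂ) * ((-1) ^ k * z ^ (n - k)))) := by
        rw [Finset.sum_powerset]
        simp only [Finset.card_univ, Fintype.card_fin]
        refine Finset.sum_congr rfl fun k hk => ?_
        have hcongr : ∀ T ∈ Finset.powersetCard k (Finset.univ : Finset (Fin n)),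
            ((p.descFactorial T.card : ℂ) * ((-1) ^ T.card * z ^ (n - T.card)))
              = (p.descFactorial k : ℂ) * ((-1) ^ k * z ^ (n - k)) := by
          intro T hT
          rw [(Finset.mem_powersetCard.mp hT).2]
        rw [Finset.sum_congr rfl hcongr, Finset.sum_const, Finset.card_powersetCard,
          Finset.card_univ, Fintype.card_fin, nsmul_eq_mul]
    _ = (-1) ^ p * (p.factorial : ℂ) * z ^ (n - p) * laguerre ((n : ℝ) - p) p z := by
        unfold laguerre
        have hcast : ((p : ℝ) + ((n : ℝ) - (p : ℝ))) = ((n : ℕ) : ℝ) := by push_cast; ring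
        rw [hcast]
        simp only [descPochhammer_eval_eq_descFactorial]
        have hsub : Finset.range (p + 1) ⊆ Finset.range (n + 1) := by
          intro x hx
          simp only [Finset.mem_range] at hx ⊢
          omega
        rw [← Finset.sum_subset hsub (fun k _ hk2 => ?_)]
        · rw [← Finset.sum_range_reflect
            (fun k => ((n.choose k : ℂ) * ((p.descFactorial k : ℂ) * ((-1) ^ k * z ^ (n - k)))))
            (p + 1)]
          rw [Finset.mul_sum]
          refine Finset.sum_congr rfl fun j hj => ?_
          have hjp : j ≤ p := by
            simp only [Finset.mem_range] at hj
            omega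
          have hJ : ((j.factorial : ℂ)) ≠ 0 := by
            exact_mod_cast Nat.factorial_ne_zero j
          have h1 : (((n.descFactorial (p - j) : ℝ) / ((p - j).factorial : ℝ) : ℝ) : ℂ)
              = (n.choose (p - j) : ℂ) := by
            rw [Nat.descFactorial_eq_factorial_mul_choose]
            push_cast
            rw [mul_comm, mul_div_assoc, div_self
              (by exact_mod_cast Nat.factorial_ne_zero (p - j)), mul_one]
          have h2 : (p.factorial : ℂ) = (p.descFactorial (p - j) : ℂ) * (j.factorial : ℂ) := by
            have h := Nat.factorial_mul_descFactorial (Nat.sub_le p j)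
            have hpj : p - (p - j) = j := by omega
            rw [hpj] at h
            exact_mod_cast (h.symm.trans (mul_comm _ _))
          have h3 : (-1 : ℂ) ^ p * (-1) ^ j = (-1) ^ (p - j) := by
            rw [← pow_add]
            have hpj : p + j = 2 * j + (p - j) := by omega
            rw [hpj, pow_add, pow_mul, neg_one_sq, one_pow, one_mul]
          have h4 : z ^ (n - p) * z ^ j = z ^ (n - (p - j)) := by
            rw [← pow_add]
            congr 1
            omega
          have hp1j : p + 1 - 1 - j = p - j := by omega
          rw [hp1j, h1, neg_pow z j, h2, ← h3, ← h4]
          field_simp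
        · simp only [Finset.mem_range, not_lt] at hk2
          have hlt : p < k := by omega
          rw [Nat.descFactorial_eq_zero_iff_lt.mpr hlt]
          push_cast
          ring
end

section
/- There is a universal constant c > 0 such that for all integers n ≥ 1 and 0 ≤ p ≤ n and every real z ≥ 0, one has |R^{[1]}(n,p,z)| ≤ c · (p+1)³ · n! · p! · z^{n-p} · e^{z}. -/
open scoped ENNReal

set_option maxHeartbeats 1000000

/-- `R¹(n,p,z) = Σ_{J₁,J₂ ⊆ {1,…,n}} (−1)^{|J₁|+|J₂|} |𝔐*(J₁,J₂)| z^{2n−|J₁|−|J₂|}`,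
where `𝔐*(J₁,J₂)` is the set of pairs `(τ₁,τ₂)` of injective maps `τᵢ : Jᵢ → {1,…,p}`
with `τ₁(j) ≠ τ₂(j)` for every `j ∈ J₁ ∩ J₂`. -/
noncomputable def R1 (n p : ℕ) (z : ℂ) : ℂ :=
  ∑ J₁ : Finset (Fin n), ∑ J₂ : Finset (Fin n),
    (-1 : ℂ) ^ (J₁.card + J₂.card) *
      (Nat.card { τ : ({ x // x ∈ J₁ } ↪ Fin p) × ({ x // x ∈ J₂ } ↪ Fin p) //
          ∀ (j₁ : { x // x ∈ J₁ }) (j₂ : { x // x ∈ J₂ }),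
            (j₁ : Fin n) = (j₂ : Fin n) → τ.1 j₁ ≠ τ.2 j₂ } : ℂ) *
      z ^ (2 * n - J₁.card - J₂.card)

open Finset

namespace R1aux


noncomputable def g (k m : ℕ) (z : ℝ) : ℝ :=
  ∑ a ∈ range (m+1), (-1:ℝ)^a * (m.choose a) * (k.descFactorial a) * z^(k-a)

lemma desc_mul_fact (i r : ℕ) : (i+r).descFactorial r * i.factorial = (i+r).factorial := by
  rw [Nat.descFactorial_eq_factorial_mul_choose, ← Nat.add_choose_mul_factorial_mul_factorial i r]
  ring

lemma summand_shift (r : ℕ) (z : ℝ) (i : ℕ) :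
    ((i+r).descFactorial r : ℝ) * z ^ (i+r) / (i+r).factorial = z ^ r * (z ^ i / i.factorial) := by
  have h : ((i+r).descFactorial r : ℝ) * i.factorial = (i+r).factorial := by
    exact_mod_cast congrArg (Nat.cast : ℕ → ℝ) (desc_mul_fact i r)
  have h1 : (i.factorial : ℝ) ≠ 0 := by positivity
  have h2 : ((i+r).factorial : ℝ) ≠ 0 := by positivity
  field_simp
  rw [pow_add]
  linear_combination (z ^ i * z ^ r) * h

lemma summable_desc (r : ℕ) (z : ℝ) :
    Summable (fun k => (k.descFactorial r : ℝ) * z ^ k / k.factorial) := by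
  rw [← summable_nat_add_iff r]
  refine Summable.congr (((Real.summable_pow_div_factorial z).mul_left (z ^ r))) ?_
  intro i
  exact (summand_shift r z i).symm

lemma exp_tsum (z : ℝ) : ∑' i : ℕ, z^i / i.factorial = Real.exp z := by
  rw [Real.exp_eq_exp_ℝ, NormedSpace.exp_eq_tsum_div]

lemma tsum_desc (r : ℕ) (z : ℝ) :
    ∑' k : ℕ, (k.descFactorial r : ℝ) * z ^ k / k.factorial = z ^ r * Real.exp z := by
  have hs := summable_desc r z
  rw [← Summable.sum_add_tsum_nat_add r hs]
  have h0 : ∑ i ∈ range r, (i.descFactorial r : ℝ) * z ^ i / i.factorial = 0 := by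
    refine sum_eq_zero fun i hi => ?_
    rw [Nat.descFactorial_of_lt (mem_range.mp hi)]
    simp
  rw [h0, zero_add]
  calc ∑' i : ℕ, ((i+r).descFactorial r : ℝ) * z ^ (i+r) / (i+r).factorial
      = ∑' i : ℕ, z ^ r * (z ^ i / i.factorial) := by
        exact tsum_congr fun i => summand_shift r z i
    _ = z ^ r * Real.exp z := by rw [tsum_mul_left, exp_tsum]

lemma desc_add (a i b : ℕ) :
    (a+i).descFactorial b
      = ∑ j ∈ range (b+1), b.choose j * (a.descFactorial j * i.descFactorial (b-j)) := by
  rw [Nat.descFactorial_eq_factorial_mul_choose, Nat.add_choose_eq,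
    Finset.Nat.sum_antidiagonal_eq_sum_range_succ_mk, mul_sum]
  refine sum_congr rfl fun j hj => ?_
  have hjb : j ≤ b := Nat.lt_succ_iff.mp (mem_range.mp hj)
  rw [Nat.descFactorial_eq_factorial_mul_choose, Nat.descFactorial_eq_factorial_mul_choose,
    ← Nat.choose_mul_factorial_mul_factorial hjb]
  ring


lemma alt_choose_sum (m j : ℕ) (hj : j ≤ m) :
    ∑ b ∈ range (m+1), (-1:ℝ)^b * (m.choose b) * (b.choose j)
      = if j = m then (-1:ℝ)^m else 0 := by
  have hsub : Ico j (m+1) ⊆ range (m+1) := by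
    intro x hx; rw [mem_range]; exact (mem_Ico.mp hx).2
  rw [← sum_subset hsub (fun x hx hnx => by
    have : x < j := by
      rw [mem_range] at hx; rw [mem_Ico] at hnx; omega
    rw [Nat.choose_eq_zero_of_lt this]; simp)]
  rw [sum_Ico_eq_sum_range]
  have hmj : m + 1 - j = (m - j) + 1 := by omega
  rw [hmj]
  have key : ∀ t ∈ range ((m-j)+1),
      (-1:ℝ)^(j+t) * (m.choose (j+t)) * ((j+t).choose j)
        = ((-1:ℝ)^j * (m.choose j)) * ((-1:ℝ)^t * ((m-j).choose t)) := by
    intro t ht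
    have htj : j + t ≤ m := by
      have := Nat.lt_succ_iff.mp (mem_range.mp ht); omega
    have := Nat.choose_mul (n := m) (Nat.le_add_right j t)
    have hc : (m.choose (j+t) : ℝ) * ((j+t).choose j) = (m.choose j) * ((m-j).choose (j + t - j)) := by
      exact_mod_cast congrArg (Nat.cast : ℕ → ℝ) this
    rw [Nat.add_sub_cancel_left] at hc
    rw [pow_add]
    linear_combination ((-1:ℝ)^j * (-1:ℝ)^t) * hc
  rw [sum_congr rfl key, ← mul_sum]
  have : ∑ t ∈ range ((m-j)+1), (-1:ℝ)^t * ((m-j).choose t)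
      = if m - j = 0 then 1 else 0 := by
    have := Int.alternating_sum_range_choose (n := m - j)
    exact_mod_cast congrArg (Int.cast : ℤ → ℝ) this
  rw [this]
  by_cases h : j = m
  · subst h; simp
  · have : ¬ (m - j = 0) := by omega
    rw [if_neg this, if_neg h, mul_zero]

lemma D_shift (a b : ℕ) (z : ℝ) (i : ℕ) :
    ((i+a).descFactorial a * (i+a).descFactorial b : ℝ) * z^(i+a) / (i+a).factorial
      = ∑ j ∈ range (b+1),
          (b.choose j * a.descFactorial j : ℝ) * z^a
            * ((i.descFactorial (b-j) : ℝ) * z^i / i.factorial) := by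
  have h1 : ((i+a).descFactorial a : ℝ) * i.factorial = (i+a).factorial := by
    exact_mod_cast congrArg (Nat.cast : ℕ → ℝ) (desc_mul_fact i a)
  have h2 : ((i+a).descFactorial b : ℝ)
      = ∑ j ∈ range (b+1), (b.choose j : ℝ) * (a.descFactorial j * i.descFactorial (b-j)) := by
    rw [add_comm i a]
    exact_mod_cast congrArg (Nat.cast : ℕ → ℝ) (desc_add a i b)
  rw [h2, mul_comm ((((i+a).descFactorial a) : ℝ)), sum_mul, sum_mul, sum_div]
  refine sum_congr rfl fun j hj => ?_
  have hi : (i.factorial : ℝ) ≠ 0 := by positivity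
  have hia : ((i+a).factorial : ℝ) ≠ 0 := by positivity
  field_simp
  rw [pow_add]
  linear_combination ((b.choose j : ℝ) * (a.descFactorial j) * (i.descFactorial (b-j)) * z^i * z^a) * h1

lemma summable_D (a b : ℕ) (z : ℝ) :
    Summable (fun k => (k.descFactorial a * k.descFactorial b : ℝ) * z^k / k.factorial) := by
  rw [← summable_nat_add_iff a]
  refine Summable.congr ?_ (fun i => (D_shift a b z i).symm)
  refine summable_sum fun j _ => ?_
  exact Summable.mul_left _ (summable_desc (b-j) z)

lemma tsum_D (a b : ℕ) (z : ℝ) :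
    ∑' k : ℕ, (k.descFactorial a * k.descFactorial b : ℝ) * z^k / k.factorial
      = ∑ j ∈ range (b+1),
          (b.choose j * a.descFactorial j : ℝ) * z^a * (z^(b-j) * Real.exp z) := by
  rw [← Summable.sum_add_tsum_nat_add a (summable_D a b z)]
  have h0 : ∑ k ∈ range a, (k.descFactorial a * k.descFactorial b : ℝ) * z^k / k.factorial = 0 := by
    refine sum_eq_zero fun k hk => ?_
    rw [Nat.descFactorial_of_lt (mem_range.mp hk)]
    simp
  rw [h0, zero_add, tsum_congr (fun i => D_shift a b z i),
    Summable.tsum_finsetSum (fun j _ => Summable.mul_left _ (summable_desc (b-j) z))]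
  refine sum_congr rfl fun j hj => ?_
  rw [tsum_mul_left, tsum_desc]

lemma master_eq (m : ℕ) {z : ℝ} (hz : 0 < z) (k : ℕ) :
    (g k m z)^2 / (k.factorial * z^k)
      = ∑ a ∈ range (m+1), ∑ b ∈ range (m+1),
          ((-1:ℝ)^(a+b) * (m.choose a) * (m.choose b) / (z^a * z^b))
            * ((k.descFactorial a * k.descFactorial b : ℝ) * z^k / k.factorial) := by
  rw [g, sq, sum_mul_sum, sum_div]
  refine sum_congr rfl fun a _ => ?_
  rw [sum_div]
  refine sum_congr rfl fun b _ => ?_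
  by_cases hak : a ≤ k
  · by_cases hbk : b ≤ k
    · have h1 : (k.factorial : ℝ) ≠ 0 := by positivity
      have h2 : z^a ≠ 0 := by positivity
      have h3 : z^b ≠ 0 := by positivity
      have h4 : z^k ≠ 0 := by positivity
      have hza : z^(k-a) = z^k / z^a := by
        rw [eq_div_iff h2, ← pow_add, Nat.sub_add_cancel hak]
      have hzb : z^(k-b) = z^k / z^b := by
        rw [eq_div_iff h3, ← pow_add, Nat.sub_add_cancel hbk]
      rw [hza, hzb]
      field_simp
      ring
    · rw [Nat.descFactorial_of_lt (show k < b by omega)]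
      simp
  · rw [Nat.descFactorial_of_lt (show k < a by omega)]
    simp

lemma summable_master (m : ℕ) {z : ℝ} (hz : 0 < z) :
    Summable (fun k => (g k m z)^2 / (k.factorial * z^k)) := by
  refine Summable.congr ?_ (fun k => (master_eq m hz k).symm)
  refine summable_sum fun a _ => summable_sum fun b _ => ?_
  exact Summable.mul_left _ (summable_D a b z)

lemma tsum_master (m : ℕ) {z : ℝ} (hz : 0 < z) :
    ∑' k : ℕ, (g k m z)^2 / (k.factorial * z^k) = Real.exp z * m.factorial / z^m := by
  rw [tsum_congr (master_eq m hz),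
    Summable.tsum_finsetSum (fun a _ => summable_sum fun b _ => Summable.mul_left _ (summable_D a b z))]
  have step1 : ∀ a ∈ range (m+1),
      (∑' k : ℕ, ∑ b ∈ range (m+1),
        ((-1:ℝ)^(a+b) * (m.choose a) * (m.choose b) / (z^a * z^b))
          * ((k.descFactorial a * k.descFactorial b : ℝ) * z^k / k.factorial))
      = ∑ b ∈ range (m+1), ∑ j ∈ range (m+1),
          ((-1:ℝ)^a * (m.choose a) * (a.descFactorial j) * Real.exp z / z^j)
            * ((-1:ℝ)^b * (m.choose b) * (b.choose j)) := by
    intro a _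
    rw [Summable.tsum_finsetSum (fun b _ => Summable.mul_left _ (summable_D a b z))]
    refine sum_congr rfl fun b hb => ?_
    rw [tsum_mul_left, tsum_D]
    have hbm : b ≤ m := Nat.lt_succ_iff.mp (mem_range.mp hb)
    rw [mul_sum, ← sum_subset (range_subset_range.mpr (by omega : b + 1 ≤ m + 1))
      (fun j _ hj => by
        have : b < j := by rw [mem_range] at *; omega
        rw [Nat.choose_eq_zero_of_lt this]; simp)]
    refine sum_congr rfl fun j hj => ?_
    have hjb : j ≤ b := Nat.lt_succ_iff.mp (mem_range.mp hj)
    have h2 : z^a ≠ 0 := by positivity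
    have h3 : z^b ≠ 0 := by positivity
    have h5 : z^j ≠ 0 := by positivity
    have hzj : z^(b-j) = z^b / z^j := by
      rw [eq_div_iff h5, ← pow_add, Nat.sub_add_cancel hjb]
    rw [hzj]
    field_simp
    ring
  rw [sum_congr rfl step1]
  have step2 : ∀ a ∈ range (m+1),
      (∑ b ∈ range (m+1), ∑ j ∈ range (m+1),
          ((-1:ℝ)^a * (m.choose a) * (a.descFactorial j) * Real.exp z / z^j)
            * ((-1:ℝ)^b * (m.choose b) * (b.choose j)))
      = ((-1:ℝ)^a * (m.choose a) * (a.descFactorial m) * Real.exp z / z^m) * (-1:ℝ)^m := by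
    intro a _
    rw [sum_comm]
    have : ∀ j ∈ range (m+1),
        (∑ b ∈ range (m+1),
          ((-1:ℝ)^a * (m.choose a) * (a.descFactorial j) * Real.exp z / z^j)
            * ((-1:ℝ)^b * (m.choose b) * (b.choose j)))
        = ((-1:ℝ)^a * (m.choose a) * (a.descFactorial j) * Real.exp z / z^j)
            * (if j = m then (-1:ℝ)^m else 0) := by
      intro j hj
      rw [← mul_sum, alt_choose_sum m j (Nat.lt_succ_iff.mp (mem_range.mp hj))]
    rw [sum_congr rfl this]
    rw [Finset.sum_eq_single_of_mem m (self_mem_range_succ m)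
      (fun j _ hj => by rw [if_neg hj, mul_zero])]
    rw [if_pos rfl]
  rw [sum_congr rfl step2]
  rw [sum_eq_single_of_mem m (self_mem_range_succ m) (fun a hmem ha => by
    have := mem_range.mp hmem
    rw [Nat.descFactorial_of_lt (show a < m by omega)]; simp)]
  have : (-1:ℝ)^m * (-1:ℝ)^m = 1 := by
    rw [← pow_add, ← two_mul, pow_mul]; norm_num
  rw [Nat.choose_self, Nat.descFactorial_self]
  push_cast
  field_simp
  linear_combination this

lemma g_sq_le (k m : ℕ) (hkm : m ≤ k) {z : ℝ} (hz : 0 ≤ z) :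
    (g k m z)^2 ≤ k.factorial * m.factorial * z^(k-m) * Real.exp z := by
  rcases eq_or_lt_of_le hz with h0 | hz'
  · -- z = 0
    subst h0
    rcases eq_or_lt_of_le hkm with hem | hlt
    · subst hem
      have hg : g m m 0 = (-1:ℝ)^m * m.factorial := by
        rw [g, sum_eq_single_of_mem m (self_mem_range_succ m) (fun a hmem ha => by
          have := mem_range.mp hmem
          rw [show (0:ℝ)^(m-a) = 0 by
            rw [zero_pow]; omega]; ring)]
        rw [Nat.choose_self, Nat.descFactorial_self, Nat.sub_self, pow_zero]
        push_cast; ring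
      rw [hg, Nat.sub_self, pow_zero, Real.exp_zero, mul_pow, ← pow_mul,
        mul_comm m 2, pow_mul]
      norm_num
      rw [sq]
    · have hg : g k m 0 = 0 := by
        rw [g]
        refine sum_eq_zero fun a hmem => ?_
        have := mem_range.mp hmem
        rw [show (0:ℝ)^(k-a) = 0 by rw [zero_pow]; omega]
        ring
      rw [hg, show (0:ℝ)^(k-m) = 0 by rw [zero_pow]; omega]
      norm_num
  · have hsum := summable_master m hz'
    have hle : (g k m z)^2 / (k.factorial * z^k) ≤ Real.exp z * m.factorial / z^m := by
      rw [← tsum_master m hz']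
      exact Summable.le_tsum hsum k (fun j _ => by positivity)
    have hk : (0:ℝ) < k.factorial * z^k := by positivity
    rw [div_le_div_iff₀ hk (by positivity : (0:ℝ) < z^m)] at hle
    have hzk : z^(k-m) * z^m = z^k := by rw [← pow_add, Nat.sub_add_cancel hkm]
    calc (g k m z)^2 ≤ Real.exp z * m.factorial * (k.factorial * z^k) / z^m := by
          rw [le_div_iff₀ (by positivity : (0:ℝ) < z^m)]; exact hle
      _ = k.factorial * m.factorial * z^(k-m) * Real.exp z := by
          rw [← hzk]; field_simp




variable {α : Type*} [Fintype α] [DecidableEq α]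

noncomputable def extEquiv (p : ℕ) (J S : Finset α) (hSJ : S ⊆ J)
    (σ : {x // x ∈ S} → Fin p) (hσ : Function.Injective σ) :
    {τ : {x // x ∈ J} ↪ Fin p // ∀ (x : {x // x ∈ J}) (h : ↑x ∈ S), τ x = σ ⟨x, h⟩}
      ≃ ({x // x ∈ J \ S} ↪ {y : Fin p // y ∈ (Finset.image σ Finset.univ)ᶜ}) where
  toFun τP := ⟨fun x => ⟨τP.1 ⟨x.1, (mem_sdiff.mp x.2).1⟩, by
      rw [mem_compl]
      intro hmem
      obtain ⟨s, -, hs⟩ := mem_image.mp hmem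
      have h1 : τP.1 ⟨s.1, hSJ s.2⟩ = σ s := by
        have := τP.2 ⟨s.1, hSJ s.2⟩ s.2
        simpa using this
      have h2 : τP.1 ⟨s.1, hSJ s.2⟩ = τP.1 ⟨x.1, (mem_sdiff.mp x.2).1⟩ := by
        rw [h1, hs]
      have := τP.1.injective h2
      have hsx : (s : α) = (x : α) := congrArg Subtype.val this
      exact (mem_sdiff.mp x.2).2 (hsx ▸ s.2)⟩, by
    intro x y hxy
    have : τP.1 ⟨x.1, (mem_sdiff.mp x.2).1⟩ = τP.1 ⟨y.1, (mem_sdiff.mp y.2).1⟩ :=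
      congrArg Subtype.val hxy
    have h5 := τP.1.injective this
    have hv : (x : α) = (y : α) := Subtype.mk_eq_mk.mp h5
    exact Subtype.ext hv⟩
  invFun e := ⟨⟨fun x => if h : ↑x ∈ S then σ ⟨x, h⟩
      else ↑(e ⟨x.1, mem_sdiff.mpr ⟨x.2, h⟩⟩), by
    intro x y hxy
    dsimp only at hxy
    by_cases hx : ↑x ∈ S <;> by_cases hy : ↑y ∈ S
    · rw [dif_pos hx, dif_pos hy] at hxy
      have hv : (x : α) = (y : α) := Subtype.mk_eq_mk.mp (hσ hxy)
      exact Subtype.ext hv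
    · rw [dif_pos hx, dif_neg hy] at hxy
      exact absurd (hxy ▸ mem_image_of_mem σ (mem_univ _))
        (mem_compl.mp (e ⟨y.1, mem_sdiff.mpr ⟨y.2, hy⟩⟩).2)
    · rw [dif_neg hx, dif_pos hy] at hxy
      exact absurd (hxy ▸ mem_image_of_mem σ (mem_univ _))
        (mem_compl.mp (e ⟨x.1, mem_sdiff.mpr ⟨x.2, hx⟩⟩).2)
    · rw [dif_neg hx, dif_neg hy] at hxy
      have h5 := e.injective (Subtype.ext hxy)
      have hv : (x : α) = (y : α) := Subtype.mk_eq_mk.mp h5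
      exact Subtype.ext hv⟩, by
    intro x h
    exact dif_pos h⟩
  left_inv τP := by
    apply Subtype.ext
    apply Function.Embedding.ext
    intro x
    simp only [Function.Embedding.coeFn_mk]
    by_cases h : ↑x ∈ S
    · rw [dif_pos h]
      exact (τP.2 x h).symm
    · rw [dif_neg h]
      rfl
  right_inv e := by
    apply Function.Embedding.ext
    intro x
    apply Subtype.ext
    simp only [Function.Embedding.coeFn_mk]
    exact dif_neg (mem_sdiff.mp x.2).2

lemma card_ext (p : ℕ) (J S : Finset α) (hSJ : S ⊆ J)
    (σ : {x // x ∈ S} → Fin p) (hσ : Function.Injective σ) :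
    Nat.card {τ : {x // x ∈ J} ↪ Fin p //
        ∀ (x : {x // x ∈ J}) (h : ↑x ∈ S), τ x = σ ⟨x, h⟩}
      = (p - S.card).descFactorial (J.card - S.card) := by
  rw [Nat.card_congr (extEquiv p J S hSJ σ hσ), Nat.card_eq_fintype_card,
    Fintype.card_embedding_eq]
  congr 1
  · rw [Fintype.card_coe, card_compl, Fintype.card_fin,
      card_image_of_injective _ hσ, card_univ, Fintype.card_coe]
  · rw [Fintype.card_coe, card_sdiff_of_subset hSJ]

section CardM

variable (n p : ℕ) (J₁ J₂ : Finset (Fin n))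

abbrev EmbPair := ({ x // x ∈ J₁ } ↪ Fin p) × ({ x // x ∈ J₂ } ↪ Fin p)

def i₁ (d : { x // x ∈ J₁ ∩ J₂ }) : { x // x ∈ J₁ } :=
  ⟨d.1, (Finset.mem_inter.mp d.2).1⟩

def i₂ (d : { x // x ∈ J₁ ∩ J₂ }) : { x // x ∈ J₂ } :=
  ⟨d.1, (Finset.mem_inter.mp d.2).2⟩

def Bd (τ : EmbPair n p J₁ J₂) : Finset { x // x ∈ J₁ ∩ J₂ } :=
  Finset.univ.filter (fun d => τ.2 (i₂ n J₁ J₂ d) = τ.1 (i₁ n J₁ J₂ d))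

lemma constraint_iff (τ : EmbPair n p J₁ J₂) :
    (∀ (j₁ : { x // x ∈ J₁ }) (j₂ : { x // x ∈ J₂ }),
        (j₁ : Fin n) = (j₂ : Fin n) → τ.1 j₁ ≠ τ.2 j₂)
      ↔ Bd n p J₁ J₂ τ = ∅ := by
  rw [Bd, filter_eq_empty_iff]
  constructor
  · intro h d _
    exact fun heq => h (i₁ n J₁ J₂ d) (i₂ n J₁ J₂ d) rfl heq.symm
  · intro h j₁ j₂ hco heq
    have hd : (j₁ : Fin n) ∈ J₁ ∩ J₂ := mem_inter.mpr ⟨j₁.2, by rw [hco]; exact j₂.2⟩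
    have h1 : i₁ n J₁ J₂ ⟨j₁, hd⟩ = j₁ := Subtype.ext rfl
    have h2 : i₂ n J₁ J₂ ⟨j₁, hd⟩ = j₂ := Subtype.ext hco
    exact h (mem_univ (⟨(j₁ : Fin n), hd⟩ : {x // x ∈ J₁ ∩ J₂})) (by rw [h1, h2, heq])

lemma card_superset_bd (SD : Finset { x // x ∈ J₁ ∩ J₂ }) :
    Nat.card {τ : EmbPair n p J₁ J₂ // SD ⊆ Bd n p J₁ J₂ τ}
      = p.descFactorial J₁.card * (p - SD.card).descFactorial (J₂.card - SD.card) := by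
  classical
  -- the image of SD in `Fin n`
  set S' : Finset (Fin n) := SD.map (Function.Embedding.subtype _) with hS'
  have hS'card : S'.card = SD.card := card_map _
  have hS'J₂ : S' ⊆ J₂ := by
    intro x hx
    obtain ⟨d, -, hd⟩ := mem_map.mp hx
    exact hd ▸ (mem_inter.mp d.2).2
  have hS'J₁ : ∀ {x : Fin n}, x ∈ S' → x ∈ J₁ := by
    intro x hx
    obtain ⟨d, -, hd⟩ := mem_map.mp hx
    exact hd ▸ (mem_inter.mp d.2).1
  -- rewrite the predicate
  have hiff : ∀ τ : EmbPair n p J₁ J₂, (SD ⊆ Bd n p J₁ J₂ τ) ↔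
      (∀ (x : { x // x ∈ J₂ }) (h : ↑x ∈ S'), τ.2 x = τ.1 ⟨↑x, hS'J₁ h⟩) := by
    intro τ
    constructor
    · intro hsub x h
      obtain ⟨d, hdSD, hd⟩ := mem_map.mp h
      have := mem_filter.mp (hsub hdSD)
      have h2 : i₂ n J₁ J₂ d = x := Subtype.ext hd
      have h1 : i₁ n J₁ J₂ d = (⟨↑x, hS'J₁ h⟩ : { x // x ∈ J₁ }) := Subtype.ext hd
      exact (congrArg (fun y => τ.2 y) h2.symm).trans (this.2.trans (congrArg (fun y => τ.1 y) h1))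
    · intro hagr d hd
      refine mem_filter.mpr ⟨mem_univ _, ?_⟩
      have hmem : (↑d : Fin n) ∈ S' := by
        rw [hS']
        exact mem_map_of_mem _ hd
      have := hagr (i₂ n J₁ J₂ d) hmem
      rw [this]
      rfl
  rw [Nat.card_congr (Equiv.subtypeEquivRight hiff)]
  rw [Nat.card_congr (Equiv.subtypeProdEquivSigmaSubtype
    (fun (a : { x // x ∈ J₁ } ↪ Fin p) (b : { x // x ∈ J₂ } ↪ Fin p) =>
      ∀ (x : { x // x ∈ J₂ }) (h : ↑x ∈ S'), b x = a ⟨↑x, hS'J₁ h⟩))]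
  rw [Nat.card_eq_fintype_card, Fintype.card_sigma]
  have hfiber : ∀ τ₁ : { x // x ∈ J₁ } ↪ Fin p,
      Fintype.card {τ₂ : { x // x ∈ J₂ } ↪ Fin p //
          ∀ (x : { x // x ∈ J₂ }) (h : ↑x ∈ S'), τ₂ x = τ₁ ⟨↑x, hS'J₁ h⟩}
        = (p - SD.card).descFactorial (J₂.card - SD.card) := by
    intro τ₁
    have hσ : Function.Injective (fun y : { x // x ∈ S' } => τ₁ ⟨y.1, hS'J₁ y.2⟩) := by
      intro y y' h
      have := τ₁.injective h
      exact Subtype.ext (Subtype.mk_eq_mk.mp this)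
    have := card_ext p J₂ S' hS'J₂ _ hσ
    rw [Nat.card_eq_fintype_card] at this
    rw [this, hS'card]
  rw [Finset.sum_congr rfl (fun τ₁ _ => hfiber τ₁), Finset.sum_const, Finset.card_univ,
    Fintype.card_embedding_eq, Fintype.card_coe, Fintype.card_fin, smul_eq_mul]

lemma powerset_filter_subset {γ : Type*} [DecidableEq γ] [Fintype γ] (B : Finset γ) :
    (Finset.univ : Finset γ).powerset.filter (· ⊆ B) = B.powerset := by
  ext T
  simp [mem_powerset, subset_univ]

lemma cardM (n p : ℕ) (J₁ J₂ : Finset (Fin n)) :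
    (Nat.card { τ : ({ x // x ∈ J₁ } ↪ Fin p) × ({ x // x ∈ J₂ } ↪ Fin p) //
          ∀ (j₁ : { x // x ∈ J₁ }) (j₂ : { x // x ∈ J₂ }),
            (j₁ : Fin n) = (j₂ : Fin n) → τ.1 j₁ ≠ τ.2 j₂ } : ℤ)
      = ∑ S ∈ (J₁ ∩ J₂).powerset,
          (-1:ℤ)^S.card *
            (p.descFactorial J₁.card * ((p - S.card).descFactorial (J₂.card - S.card))) := by
  classical
  have h1 : Nat.card { τ : EmbPair n p J₁ J₂ //
        ∀ (j₁ : { x // x ∈ J₁ }) (j₂ : { x // x ∈ J₂ }),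
          (j₁ : Fin n) = (j₂ : Fin n) → τ.1 j₁ ≠ τ.2 j₂ }
      = (Finset.univ.filter (fun τ : EmbPair n p J₁ J₂ => Bd n p J₁ J₂ τ = ∅)).card := by
    rw [Nat.card_eq_fintype_card, Fintype.card_subtype]
    congr 1
    apply Finset.filter_congr
    intro τ _
    exact constraint_iff n p J₁ J₂ τ
  rw [h1, Finset.card_filter]
  push_cast
  have per : ∀ τ : EmbPair n p J₁ J₂,
      (if Bd n p J₁ J₂ τ = ∅ then (1:ℤ) else 0)
        = ∑ SD ∈ (Finset.univ : Finset { x // x ∈ J₁ ∩ J₂ }).powerset,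
            if SD ⊆ Bd n p J₁ J₂ τ then (-1:ℤ)^SD.card else 0 := by
    intro τ
    rw [← Finset.sum_filter, powerset_filter_subset (Bd n p J₁ J₂ τ),
      Finset.sum_powerset_neg_one_pow_card]
  rw [Finset.sum_congr rfl (fun τ _ => per τ), Finset.sum_comm]
  have inner : ∀ SD ∈ (Finset.univ : Finset { x // x ∈ J₁ ∩ J₂ }).powerset,
      (∑ τ : EmbPair n p J₁ J₂, if SD ⊆ Bd n p J₁ J₂ τ then (-1:ℤ)^SD.card else 0)
        = (-1:ℤ)^SD.card *
            (p.descFactorial J₁.card * ((p - SD.card).descFactorial (J₂.card - SD.card))) := by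
    intro SD _
    rw [← Finset.sum_filter, Finset.sum_const]
    have : (Finset.univ.filter (fun τ : EmbPair n p J₁ J₂ => SD ⊆ Bd n p J₁ J₂ τ)).card
        = Nat.card {τ : EmbPair n p J₁ J₂ // SD ⊆ Bd n p J₁ J₂ τ} := by
      rw [Nat.card_eq_fintype_card, Fintype.card_subtype]
    rw [this, card_superset_bd, nsmul_eq_mul]
    push_cast
    ring
  rw [Finset.sum_congr rfl inner]
  have lhs := Finset.sum_powerset_apply_card
    (fun s => (-1:ℤ)^s * (p.descFactorial J₁.card * ((p - s).descFactorial (J₂.card - s))))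
    (x := (Finset.univ : Finset { x // x ∈ J₁ ∩ J₂ }))
  have rhs := Finset.sum_powerset_apply_card
    (fun s => (-1:ℤ)^s * (p.descFactorial J₁.card * ((p - s).descFactorial (J₂.card - s))))
    (x := J₁ ∩ J₂)
  rw [lhs, rhs, Finset.card_univ, Fintype.card_coe]

end CardM


lemma desc_split (p s t : ℕ) :
    p.descFactorial (s + t) = p.descFactorial s * (p - s).descFactorial t := by
  induction t with
  | zero => simp
  | succ t ih =>
    rw [← Nat.add_assoc, Nat.descFactorial_succ, Nat.descFactorial_succ, ih,
      Nat.sub_sub]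
    ring

lemma choose_desc_swap (M Q a : ℕ) :
    M.choose a * Q.descFactorial a = Q.choose a * M.descFactorial a := by
  rw [Nat.descFactorial_eq_factorial_mul_choose, Nat.descFactorial_eq_factorial_mul_choose]
  ring

lemma g_alt (M Q : ℕ) (hQM : Q ≤ M) (z : ℝ) :
    ∑ a ∈ range (M+1), (M.choose a) • ((-1:ℝ)^a * (Q.descFactorial a) * z^(M-a))
      = g M Q z := by
  rw [g, ← sum_subset (range_subset_range.mpr (by omega : Q + 1 ≤ M + 1))
    (fun a _ ha => by
      have : Q < a := by rw [mem_range] at *; omega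
      rw [Nat.descFactorial_of_lt this]
      simp)]
  refine sum_congr rfl fun a _ => ?_
  have := choose_desc_swap M Q a
  have hc : (M.choose a : ℝ) * Q.descFactorial a = (Q.choose a : ℝ) * M.descFactorial a := by
    exact_mod_cast congrArg (Nat.cast : ℕ → ℝ) this
  rw [nsmul_eq_mul]
  linear_combination ((-1:ℝ)^a * z^(M-a)) * hc


noncomputable def R1R (n p : ℕ) (z : ℝ) : ℝ :=
  ∑ J₁ : Finset (Fin n), ∑ J₂ : Finset (Fin n),
    (-1 : ℝ) ^ (J₁.card + J₂.card) *
      (Nat.card { τ : ({ x // x ∈ J₁ } ↪ Fin p) × ({ x // x ∈ J₂ } ↪ Fin p) //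
          ∀ (j₁ : { x // x ∈ J₁ }) (j₂ : { x // x ∈ J₂ }),
            (j₁ : Fin n) = (j₂ : Fin n) → τ.1 j₁ ≠ τ.2 j₂ } : ℝ) *
      z ^ (2 * n - J₁.card - J₂.card)

lemma R1_coe (n p : ℕ) (z : ℝ) : R1 n p (z : ℂ) = ((R1R n p z : ℝ) : ℂ) := by
  rw [R1, R1R]
  push_cast
  rfl

def u (n p : ℕ) (z : ℝ) (s : ℕ) (J : Finset (Fin n)) : ℝ :=
  (-1:ℝ)^J.card * ((p - s).descFactorial (J.card - s)) * z^(n - J.card)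

lemma step1 (n p : ℕ) (z : ℝ) :
    R1R n p z = ∑ J₁ : Finset (Fin n), ∑ J₂ : Finset (Fin n),
      ∑ S ∈ (J₁ ∩ J₂).powerset,
        ((-1:ℝ)^S.card * (p.descFactorial S.card)) *
          (u n p z S.card J₁ * u n p z S.card J₂) := by
  rw [R1R]
  refine sum_congr rfl fun J₁ _ => sum_congr rfl fun J₂ _ => ?_
  have hc : (Nat.card { τ : ({ x // x ∈ J₁ } ↪ Fin p) × ({ x // x ∈ J₂ } ↪ Fin p) //
          ∀ (j₁ : { x // x ∈ J₁ }) (j₂ : { x // x ∈ J₂ }),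
            (j₁ : Fin n) = (j₂ : Fin n) → τ.1 j₁ ≠ τ.2 j₂ } : ℝ)
      = ((∑ S ∈ (J₁ ∩ J₂).powerset, (-1:ℤ)^S.card *
          (p.descFactorial J₁.card * ((p - S.card).descFactorial (J₂.card - S.card))) : ℤ) : ℝ) := by
    rw [← cardM n p J₁ J₂]
    push_cast
    rfl
  rw [hc]
  push_cast
  rw [mul_sum, sum_mul]
  refine sum_congr rfl fun S hS => ?_
  have hSJ₁ : S ⊆ J₁ := (mem_powerset.mp hS).trans inter_subset_left
  have hSJ₂ : S ⊆ J₂ := (mem_powerset.mp hS).trans inter_subset_right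
  have hs1 : S.card ≤ J₁.card := card_le_card hSJ₁
  have hs2 : S.card ≤ J₂.card := card_le_card hSJ₂
  have hj1 : J₁.card ≤ n := by
    have := card_le_univ J₁; simpa using this
  have hj2 : J₂.card ≤ n := by
    have := card_le_univ J₂; simpa using this
  have hsplitn : p.descFactorial J₁.card
      = p.descFactorial S.card * (p - S.card).descFactorial (J₁.card - S.card) := by
    rw [← desc_split]
    congr 1
    omega
  have hsplit : (p.descFactorial J₁.card : ℝ)
      = (p.descFactorial S.card : ℝ) * (p - S.card).descFactorial (J₁.card - S.card) := by
    exact_mod_cast congrArg (Nat.cast : ℕ → ℝ) hsplitn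
  have hpow : z^(2*n - J₁.card - J₂.card) = z^(n - J₁.card) * z^(n - J₂.card) := by
    rw [← pow_add]
    congr 1
    omega
  rw [u, u, hsplit, hpow, pow_add]
  ring

lemma step2 (n p : ℕ) (z : ℝ) :
    (∑ J₁ : Finset (Fin n), ∑ J₂ : Finset (Fin n),
      ∑ S ∈ (J₁ ∩ J₂).powerset,
        ((-1:ℝ)^S.card * (p.descFactorial S.card)) *
          (u n p z S.card J₁ * u n p z S.card J₂))
    = ∑ S : Finset (Fin n), ((-1:ℝ)^S.card * (p.descFactorial S.card)) *
        ((∑ J : Finset (Fin n), if S ⊆ J then u n p z S.card J else 0) *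
         (∑ J : Finset (Fin n), if S ⊆ J then u n p z S.card J else 0)) := by
  have key : ∀ J₁ J₂ : Finset (Fin n),
      (∑ S ∈ (J₁ ∩ J₂).powerset,
        ((-1:ℝ)^S.card * (p.descFactorial S.card)) *
          (u n p z S.card J₁ * u n p z S.card J₂))
      = ∑ S : Finset (Fin n),
          if S ⊆ J₁ ∧ S ⊆ J₂ then
            ((-1:ℝ)^S.card * (p.descFactorial S.card)) *
              (u n p z S.card J₁ * u n p z S.card J₂) else 0 := by
    intro J₁ J₂
    rw [← sum_filter]
    refine sum_congr ?_ (fun _ _ => rfl)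
    ext T
    rw [mem_powerset, mem_filter]
    simp only [mem_univ, true_and]
    exact subset_inter_iff
  rw [sum_congr rfl (fun J₁ _ => sum_congr rfl (fun J₂ _ => key J₁ J₂))]
  rw [sum_congr rfl (fun J₁ _ => sum_comm), sum_comm]
  refine sum_congr rfl fun S _ => ?_
  have hsplit : ∀ J₁ J₂ : Finset (Fin n),
      (if S ⊆ J₁ ∧ S ⊆ J₂ then
          ((-1:ℝ)^S.card * (p.descFactorial S.card)) *
            (u n p z S.card J₁ * u n p z S.card J₂) else 0)
      = ((-1:ℝ)^S.card * (p.descFactorial S.card)) *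
          ((if S ⊆ J₁ then u n p z S.card J₁ else 0) *
           (if S ⊆ J₂ then u n p z S.card J₂ else 0)) := by
    intro J₁ J₂
    by_cases h₁ : S ⊆ J₁ <;> by_cases h₂ : S ⊆ J₂ <;> simp [h₁, h₂]
  rw [sum_congr rfl (fun J₁ _ => sum_congr rfl (fun J₂ _ => hsplit J₁ J₂))]
  rw [sum_congr rfl (fun J₁ _ => by rw [← mul_sum, ← mul_sum]), ← mul_sum, ← sum_mul,
    ← mul_assoc, mul_assoc]

lemma v_eval (n p : ℕ) (hpn : p ≤ n) (z : ℝ) (S : Finset (Fin n)) :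
    (∑ J : Finset (Fin n), if S ⊆ J then u n p z S.card J else 0)
      = (-1:ℝ)^S.card * g (n - S.card) (p - S.card) z := by
  have hsn : S.card ≤ n := by
    have := card_le_univ S; simpa using this
  rw [← sum_filter]
  have hbij : (∑ J ∈ univ.filter (fun J => S ⊆ J), u n p z S.card J)
      = ∑ K ∈ Sᶜ.powerset, u n p z S.card (S ∪ K) := by
    refine sum_nbij' (fun J => J \ S) (fun K => S ∪ K) ?_ ?_ ?_ ?_ ?_
    · intro J _
      rw [mem_powerset]
      intro x hx
      rw [mem_compl]
      exact (mem_sdiff.mp hx).2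
    · intro K _
      rw [mem_filter]
      exact ⟨mem_univ _, subset_union_left⟩
    · intro J hJ
      rw [mem_filter] at hJ
      exact union_sdiff_of_subset hJ.2
    · intro K hK
      rw [mem_powerset] at hK
      ext x
      simp only [mem_sdiff, mem_union]
      constructor
      · rintro ⟨h1 | h1, h2⟩
        · exact absurd h1 h2
        · exact h1
      · intro hx
        exact ⟨Or.inr hx, fun hxS => (mem_compl.mp (hK hx)) hxS⟩
    · intro J hJ
      rw [mem_filter] at hJ
      rw [union_sdiff_of_subset hJ.2]
  rw [hbij]
  have hcard : ∀ K ∈ Sᶜ.powerset, u n p z S.card (S ∪ K)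
      = (-1:ℝ)^S.card *
          ((-1:ℝ)^K.card * (((p - S.card).descFactorial K.card : ℕ) : ℝ)
            * z^((n - S.card) - K.card)) := by
    intro K hK
    rw [mem_powerset] at hK
    have hdisj : Disjoint S K := disjoint_left.mpr (fun a haS haK => (mem_compl.mp (hK haK)) haS)
    rw [u, card_union_of_disjoint hdisj, pow_add]
    have h1 : S.card + K.card - S.card = K.card := by omega
    have h2 : n - (S.card + K.card) = (n - S.card) - K.card := by omega
    rw [h1, h2]
    ring
  rw [sum_congr rfl hcard, ← mul_sum]
  congr 1
  have := sum_powerset_apply_card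
    (fun a => (-1:ℝ)^a * (((p - S.card).descFactorial a : ℕ) : ℝ) * z^((n - S.card) - a))
    (x := Sᶜ)
  rw [this, card_compl, Fintype.card_fin]
  exact g_alt (n - S.card) (p - S.card) (by omega) z

lemma R1R_eq (n p : ℕ) (hpn : p ≤ n) (z : ℝ) :
    R1R n p z = ∑ s ∈ range (n+1),
      (n.choose s : ℕ) • ((-1:ℝ)^s * (p.descFactorial s) * (g (n-s) (p-s) z)^2) := by
  rw [step1, step2]
  have persum : ∀ S ∈ (univ : Finset (Finset (Fin n))),
      ((-1:ℝ)^S.card * (p.descFactorial S.card)) *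
        ((∑ J : Finset (Fin n), if S ⊆ J then u n p z S.card J else 0) *
         (∑ J : Finset (Fin n), if S ⊆ J then u n p z S.card J else 0))
      = (-1:ℝ)^S.card * (p.descFactorial S.card) * (g (n - S.card) (p - S.card) z)^2 := by
    intro S _
    rw [v_eval n p hpn z S]
    have hsq : ((-1:ℝ)^S.card) * ((-1:ℝ)^S.card) = 1 := by
      rw [← pow_add, ← two_mul, pow_mul]
      norm_num
    linear_combination ((-1:ℝ)^S.card * (p.descFactorial S.card) *
      (g (n - S.card) (p - S.card) z)^2) * hsq
  rw [sum_congr rfl persum, ← powerset_univ,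
    sum_powerset_apply_card
      (fun s => (-1:ℝ)^s * ((p.descFactorial s : ℕ) : ℝ) * (g (n-s) (p-s) z)^2)
      (x := (univ : Finset (Fin n))), card_univ, Fintype.card_fin]

lemma key_id (n p s : ℕ) (hsp : s ≤ p) (hpn : p ≤ n) :
    n.choose s * p.descFactorial s * ((n-s).factorial * (p-s).factorial) * s.factorial
      = n.factorial * p.factorial := by
  have h1 := Nat.choose_mul_factorial_mul_factorial (le_trans hsp hpn)
  have h2 := Nat.factorial_mul_descFactorial hsp
  calc n.choose s * p.descFactorial s * ((n-s).factorial * (p-s).factorial) * s.factorial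
      = (n.choose s * s.factorial * (n-s).factorial) * ((p-s).factorial * p.descFactorial s) := by
        ring
    _ = n.factorial * p.factorial := by rw [h1, h2]



end R1aux

/-- There is a universal constant `c > 0` such that for all integers `n ≥ 1`,
`0 ≤ p ≤ n` and every real `z ≥ 0`,
`|R¹(n,p,z)| ≤ c (p+1)³ n! p! z^{n-p} e^z`. -/
theorem abs_R1_le :
    ∃ c : ℝ, 0 < c ∧ ∀ (n p : ℕ), 1 ≤ n → p ≤ n → ∀ z : ℝ, 0 ≤ z →
      ‖R1 n p (z : ℂ)‖ ≤
        c * ((p : ℝ) + 1) ^ 3 * n.factorial * p.factorial * z ^ (n - p) * Real.exp z := by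
  refine ⟨3, by norm_num, ?_⟩
  intro n p hn hpn z hz
  rw [R1aux.R1_coe n p z, Complex.norm_real, Real.norm_eq_abs, R1aux.R1R_eq n p hpn z]
  have hbound : ∀ s ∈ Finset.range (n+1),
      |(n.choose s : ℕ) • ((-1:ℝ)^s * (p.descFactorial s) * (R1aux.g (n-s) (p-s) z)^2)|
        ≤ ((n.factorial : ℝ) * p.factorial / s.factorial) * (z^(n-p) * Real.exp z) := by
    intro s hs
    have hsn : s ≤ n := Nat.lt_succ_iff.mp (Finset.mem_range.mp hs)
    have h1 : (n.choose s : ℕ) • ((-1:ℝ)^s * (p.descFactorial s) * (R1aux.g (n-s) (p-s) z)^2)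
        = (-1:ℝ)^s * ((n.choose s : ℝ) * (p.descFactorial s) * (R1aux.g (n-s) (p-s) z)^2) := by
      rw [nsmul_eq_mul]; ring
    rw [h1, abs_mul, abs_pow, abs_neg, abs_one, one_pow, one_mul,
      abs_of_nonneg (by positivity)]
    by_cases hsp : s ≤ p
    · have hGB := R1aux.g_sq_le (n-s) (p-s) (by omega) hz
      rw [show (n-s) - (p-s) = n - p by omega] at hGB
      have hid : ((n.choose s : ℝ) * (p.descFactorial s) *
            (((n-s).factorial : ℝ) * ((p-s).factorial : ℝ)))
          = (n.factorial : ℝ) * p.factorial / s.factorial := by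
        rw [eq_div_iff (by positivity : (s.factorial : ℝ) ≠ 0)]
        exact_mod_cast congrArg (Nat.cast : ℕ → ℝ) (R1aux.key_id n p s hsp hpn)
      have step : (n.choose s : ℝ) * (p.descFactorial s) * (R1aux.g (n-s) (p-s) z)^2
          ≤ (n.choose s : ℝ) * (p.descFactorial s) *
              (((n-s).factorial : ℝ) * (p-s).factorial * z^(n-p) * Real.exp z) :=
        mul_le_mul_of_nonneg_left hGB (by positivity)
      refine le_trans step (le_of_eq ?_)
      rw [← hid]
      ring
    · have hz0 : p.descFactorial s = 0 := Nat.descFactorial_eq_zero_iff_lt.mpr (by omega)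
      rw [hz0]
      push_cast
      rw [mul_zero, zero_mul]
      positivity
  calc |∑ s ∈ Finset.range (n+1),
        (n.choose s : ℕ) • ((-1:ℝ)^s * (p.descFactorial s) * (R1aux.g (n-s) (p-s) z)^2)|
      ≤ ∑ s ∈ Finset.range (n+1),
        |(n.choose s : ℕ) • ((-1:ℝ)^s * (p.descFactorial s) * (R1aux.g (n-s) (p-s) z)^2)| :=
        Finset.abs_sum_le_sum_abs _ _
    _ ≤ ∑ s ∈ Finset.range (n+1),
        ((n.factorial : ℝ) * p.factorial / s.factorial) * (z^(n-p) * Real.exp z) :=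
        Finset.sum_le_sum hbound
    _ = (∑ s ∈ Finset.range (n+1), (1:ℝ)/s.factorial) *
        ((n.factorial : ℝ) * p.factorial * (z^(n-p) * Real.exp z)) := by
        rw [Finset.sum_mul]
        refine Finset.sum_congr rfl fun s _ => ?_
        ring
    _ ≤ 3 * ((n.factorial : ℝ) * p.factorial * (z^(n-p) * Real.exp z)) := by
        apply mul_le_mul_of_nonneg_right ?_ (by positivity)
        have h1 : ∑ s ∈ Finset.range (n+1), (1:ℝ)/s.factorial
            = ∑ s ∈ Finset.range (n+1), (1:ℝ)^s/s.factorial := by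
          simp
        rw [h1]
        refine le_trans (Real.sum_le_exp_of_nonneg (by norm_num) (n+1)) ?_
        have := Real.exp_one_lt_d9
        linarith
    _ ≤ 3 * ((p:ℝ)+1)^3 * n.factorial * p.factorial * z^(n-p) * Real.exp z := by
        have hp1 : (1:ℝ) ≤ ((p:ℝ)+1)^3 := by
          have h0' : (0:ℝ) ≤ (p:ℝ) := Nat.cast_nonneg p
          have h0 : (1:ℝ) ≤ (p:ℝ)+1 := by linarith
          calc (1:ℝ) = 1^3 := by norm_num
            _ ≤ ((p:ℝ)+1)^3 := by gcongr
        have hre : 3 * ((n.factorial : ℝ) * p.factorial * (z^(n-p) * Real.exp z))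
            = 3 * 1 * n.factorial * p.factorial * z^(n-p) * Real.exp z := by ring
        rw [hre]
        gcongr
end
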